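/- For every ρ > 0 and every v ∈ ℝ, the second derivative of f_ρ satisfies 0 ≤ f_ρ''(v) ≤ 2/ρ. -/

import Mathlib

open Filter Set

/-- The smoothed absolute value `f_ρ`. -/
noncomputable def smoothAbs (ρ : ℝ) (v : ℝ) : ℝ :=
  if ρ ≤ |v| then |v| else ρ / 3 + (v ^ 2 / ρ ^ 2) * (ρ - |v| / 3)

/-- First derivative of `smoothAbs`. -/
noncomputable def sa1 (ρ : ℝ) (v : ℝ) : ℝ :=
  if ρ ≤ |v| then v / |v| else 2 * v / ρ - v * |v| / ρ ^ 2

/-- Second derivative of `smoothAbs`. -/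
noncomputable def sa2 (ρ : ℝ) (v : ℝ) : ℝ :=
  if ρ ≤ |v| then 0 else 2 / ρ - 2 * |v| / ρ ^ 2

lemma hasDerivAt_mul_abs (x : ℝ) : HasDerivAt (fun y : ℝ => y * |y|) (2 * |x|) x := by
  rcases lt_trichotomy x 0 with hx | hx | hx
  · have h : HasDerivAt (fun y : ℝ => -(y ^ 2)) (-(2 * x ^ 1)) x := (hasDerivAt_pow 2 x).neg
    have h' : HasDerivAt (fun y : ℝ => y * |y|) (-(2 * x ^ 1)) x := by
      apply h.congr_of_eventuallyEq
      filter_upwards [isOpen_Iio.eventually_mem hx] with y (hy : y < 0)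
      rw [abs_of_neg hy]; ring
    convert h' using 1
    rw [abs_of_neg hx]; ring
  · subst hx
    have h : HasDerivAt (fun y : ℝ => y * |y|) 0 0 := by
      rw [hasDerivAt_iff_isLittleO]
      rw [Asymptotics.isLittleO_iff]
      intro ε hε
      filter_upwards [Metric.ball_mem_nhds (0 : ℝ) hε] with y hy
      simp only [Metric.mem_ball, Real.dist_eq, sub_zero] at hy
      simp only [smul_eq_mul, mul_zero, sub_zero, zero_mul, abs_zero, norm_mul,
        Real.norm_eq_abs, abs_abs]
      exact mul_le_mul_of_nonneg_right (le_of_lt hy) (abs_nonneg y)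
    simpa using h
  · have h : HasDerivAt (fun y : ℝ => y ^ 2) (2 * x ^ 1) x := hasDerivAt_pow 2 x
    have h' : HasDerivAt (fun y : ℝ => y * |y|) (2 * x ^ 1) x := by
      apply h.congr_of_eventuallyEq
      filter_upwards [isOpen_Ioi.eventually_mem hx] with y (hy : 0 < y)
      rw [abs_of_pos hy]; ring
    convert h' using 1
    rw [abs_of_pos hx]; ring

/-- gluing a derivative from two one-sided pieces -/
lemma glue {f F G : ℝ → ℝ} {a d : ℝ} (hF : HasDerivAt F d a) (hG : HasDerivAt G d a)
    (hl : ∀ᶠ x in nhdsWithin a (Iic a), f x = F x)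
    (hr : ∀ᶠ x in nhdsWithin a (Ici a), f x = G x)
    (hfa : f a = F a) (hga : f a = G a) : HasDerivAt f d a := by
  have h1 : HasDerivWithinAt f d (Iic a) a :=
    (hF.hasDerivWithinAt).congr_of_eventuallyEq hl hfa
  have h2 : HasDerivWithinAt f d (Ici a) a :=
    (hG.hasDerivWithinAt).congr_of_eventuallyEq hr hga
  have h3 := h1.union h2
  rw [Iic_union_Ici] at h3
  exact hasDerivWithinAt_univ.mp h3

lemma hasDerivAt_innerF {ρ : ℝ} (hρ : 0 < ρ) (v : ℝ) :
    HasDerivAt (fun x : ℝ => ρ / 3 + (x ^ 2 / ρ ^ 2) * (ρ - |x| / 3))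
      (2 * v / ρ - v * |v| / ρ ^ 2) v := by
  have hρ' : (ρ : ℝ) ≠ 0 := ne_of_gt hρ
  have h1 : HasDerivAt (fun x : ℝ => x * (x * |x|)) (1 * (v * |v|) + v * (2 * |v|)) v :=
    (hasDerivAt_id v).mul (hasDerivAt_mul_abs v)
  have h2 : HasDerivAt (fun x : ℝ => x ^ 2) (2 * v ^ 1) v := hasDerivAt_pow 2 v
  have h3 := ((h2.div_const ρ).sub (h1.div_const (3 * ρ ^ 2))).const_add (ρ / 3)
  have h4 : HasDerivAt (fun x : ℝ => ρ / 3 + (x ^ 2 / ρ - x * (x * |x|) / (3 * ρ ^ 2)))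
      (2 * v / ρ - v * |v| / ρ ^ 2) v := by
    refine h3.congr_deriv ?_
    field_simp
    try ring
  apply h4.congr_of_eventuallyEq
  filter_upwards with x
  have hx : x * (x * |x|) = x ^ 2 * |x| := by ring
  rw [hx]
  field_simp
  try ring

lemma smoothAbs_eq_innerF {ρ x : ℝ} (hx : |x| < ρ) :
    smoothAbs ρ x = ρ / 3 + (x ^ 2 / ρ ^ 2) * (ρ - |x| / 3) := by
  rw [smoothAbs, if_neg (not_le.mpr hx)]

lemma sa1_inner_eq {ρ x : ℝ} (hx : |x| < ρ) : sa1 ρ x = 2 * x / ρ - x * |x| / ρ ^ 2 := by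
  rw [sa1, if_neg (not_le.mpr hx)]

lemma hasDerivAt_smoothAbs {ρ : ℝ} (hρ : 0 < ρ) (v : ℝ) :
    HasDerivAt (smoothAbs ρ) (sa1 ρ v) v := by
  have hρ' : (ρ : ℝ) ≠ 0 := ne_of_gt hρ
  have habsρ : |ρ| = ρ := abs_of_pos hρ
  have habsρ' : |(-ρ : ℝ)| = ρ := by rw [abs_neg, habsρ]
  rcases lt_trichotomy (|v|) ρ with hv | hv | hv
  · -- interior
    have h := hasDerivAt_innerF hρ v
    have h' : HasDerivAt (smoothAbs ρ) (2 * v / ρ - v * |v| / ρ ^ 2) v := by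
      apply h.congr_of_eventuallyEq
      have hopen : IsOpen {x : ℝ | |x| < ρ} := isOpen_lt (continuous_abs) continuous_const
      filter_upwards [hopen.eventually_mem hv] with x hx
      exact smoothAbs_eq_innerF hx
    rwa [sa1, if_neg (not_le.mpr hv)]
  · -- boundary
    rcases (abs_eq (le_of_lt hρ)).mp hv with hv' | hv' <;> rw [hv']
    · -- v = ρ
      have hval : sa1 ρ ρ = 1 := by
        rw [sa1, if_pos habsρ.ge, habsρ, div_self hρ']
      rw [hval]
      apply glue (F := fun x : ℝ => ρ / 3 + (x ^ 2 / ρ ^ 2) * (ρ - |x| / 3)) (G := fun x => x)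
      · have h := hasDerivAt_innerF hρ ρ
        convert h using 1
        rw [habsρ]
        field_simp
        try ring
      · exact hasDerivAt_id ρ
      · have hev : ∀ᶠ x in nhdsWithin ρ (Iic ρ), -ρ < x := by
          apply eventually_nhdsWithin_of_eventually_nhds
          exact isOpen_Ioi.eventually_mem (Set.mem_Ioi.mpr (by linarith))
        filter_upwards [hev, eventually_mem_nhdsWithin] with x hx1 (hx2 : x ≤ ρ)
        rcases lt_or_eq_of_le hx2 with h | h
        · exact smoothAbs_eq_innerF (abs_lt.mpr ⟨hx1, h⟩)
        · subst h
          rw [smoothAbs, if_pos habsρ.ge, habsρ]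
          field_simp
          try ring
      · filter_upwards [eventually_mem_nhdsWithin] with x (hx : ρ ≤ x)
        have hxpos : 0 < x := lt_of_lt_of_le hρ hx
        rw [smoothAbs, if_pos (by rw [abs_of_pos hxpos]; exact hx), abs_of_pos hxpos]
      · rw [smoothAbs, if_pos habsρ.ge, habsρ]
        field_simp
        try ring
      · rw [smoothAbs, if_pos habsρ.ge, habsρ]
    · -- v = -ρ
      have hval : sa1 ρ (-ρ) = -1 := by
        rw [sa1, if_pos habsρ'.ge, habsρ', neg_div, div_self hρ']
      rw [hval]
      apply glue (F := fun x : ℝ => -x)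
        (G := fun x : ℝ => ρ / 3 + (x ^ 2 / ρ ^ 2) * (ρ - |x| / 3))
      · exact (hasDerivAt_id' (-ρ)).neg
      · have h := hasDerivAt_innerF hρ (-ρ)
        convert h using 1
        rw [habsρ']
        field_simp
        try ring
      · filter_upwards [eventually_mem_nhdsWithin] with x (hx : x ≤ -ρ)
        have hxneg : x < 0 := by linarith
        rw [smoothAbs, if_pos (by rw [abs_of_neg hxneg]; linarith), abs_of_neg hxneg]
      · have hev : ∀ᶠ x in nhdsWithin (-ρ) (Ici (-ρ)), x < ρ := by
          apply eventually_nhdsWithin_of_eventually_nhds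
          exact isOpen_Iio.eventually_mem (Set.mem_Iio.mpr (by linarith))
        filter_upwards [hev, eventually_mem_nhdsWithin] with x hx1 (hx2 : -ρ ≤ x)
        rcases lt_or_eq_of_le hx2 with h | h
        · exact smoothAbs_eq_innerF (abs_lt.mpr ⟨h, hx1⟩)
        · rw [← h, smoothAbs, if_pos habsρ'.ge, habsρ']
          field_simp
          try ring
      · rw [smoothAbs, if_pos habsρ'.ge, habsρ']; ring
      · rw [smoothAbs, if_pos habsρ'.ge, habsρ']
        field_simp
        try ring
  · -- exterior
    have hvne : v ≠ 0 := by
      intro h; rw [h, abs_zero] at hv; linarith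
    rcases lt_trichotomy v 0 with hvs | hvs | hvs
    · have h : HasDerivAt (fun x : ℝ => -x) (-1) v := by exact (hasDerivAt_id' v).neg
      have h' : HasDerivAt (smoothAbs ρ) (-1) v := by
        apply h.congr_of_eventuallyEq
        have hopen : IsOpen {x : ℝ | ρ < |x| ∧ x < 0} :=
          (isOpen_lt continuous_const continuous_abs).inter isOpen_Iio
        filter_upwards [hopen.eventually_mem ⟨hv, hvs⟩] with x ⟨hx1, hx2⟩
        rw [smoothAbs, if_pos hx1.le, abs_of_neg hx2]
      have hval : sa1 ρ v = -1 := by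
        rw [sa1, if_pos hv.le, abs_of_neg hvs, div_neg, div_self hvne]
      rwa [hval]
    · exact absurd hvs hvne
    · have h' : HasDerivAt (smoothAbs ρ) 1 v := by
        apply (hasDerivAt_id v).congr_of_eventuallyEq
        have hopen : IsOpen {x : ℝ | ρ < |x| ∧ 0 < x} :=
          (isOpen_lt continuous_const continuous_abs).inter isOpen_Ioi
        filter_upwards [hopen.eventually_mem ⟨hv, hvs⟩] with x ⟨hx1, hx2⟩
        rw [smoothAbs, if_pos hx1.le, abs_of_pos hx2]
        rfl
      have hval : sa1 ρ v = 1 := by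
        rw [sa1, if_pos hv.le, abs_of_pos hvs, div_self (ne_of_gt hvs)]
      rwa [hval]

lemma hasDerivAt_inner1 {ρ : ℝ} (v : ℝ) :
    HasDerivAt (fun x : ℝ => 2 * x / ρ - x * |x| / ρ ^ 2)
      (2 / ρ - 2 * |v| / ρ ^ 2) v := by
  have h1 : HasDerivAt (fun x : ℝ => 2 * x) 2 v := by
    simpa using (hasDerivAt_id v).const_mul 2
  have h2 := (h1.div_const ρ).sub ((hasDerivAt_mul_abs v).div_const (ρ ^ 2))
  exact h2

lemma hasDerivAt_sa1 {ρ : ℝ} (hρ : 0 < ρ) (v : ℝ) :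
    HasDerivAt (sa1 ρ) (sa2 ρ v) v := by
  have hρ' : (ρ : ℝ) ≠ 0 := ne_of_gt hρ
  have habsρ : |ρ| = ρ := abs_of_pos hρ
  have habsρ' : |(-ρ : ℝ)| = ρ := by rw [abs_neg, habsρ]
  rcases lt_trichotomy (|v|) ρ with hv | hv | hv
  · have h := hasDerivAt_inner1 (ρ := ρ) v
    have h' : HasDerivAt (sa1 ρ) (2 / ρ - 2 * |v| / ρ ^ 2) v := by
      apply h.congr_of_eventuallyEq
      have hopen : IsOpen {x : ℝ | |x| < ρ} := isOpen_lt (continuous_abs) continuous_const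
      filter_upwards [hopen.eventually_mem hv] with x hx
      exact sa1_inner_eq hx
    rwa [sa2, if_neg (not_le.mpr hv)]
  · rcases (abs_eq (le_of_lt hρ)).mp hv with hv' | hv' <;> rw [hv']
    · have hval : sa2 ρ ρ = 0 := by rw [sa2, if_pos habsρ.ge]
      rw [hval]
      apply glue (F := fun x : ℝ => 2 * x / ρ - x * |x| / ρ ^ 2) (G := fun _ : ℝ => (1:ℝ))
      · have h := hasDerivAt_inner1 (ρ := ρ) ρ
        convert h using 1
        rw [habsρ]
        field_simp
        try ring
      · exact hasDerivAt_const ρ 1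
      · have hev : ∀ᶠ x in nhdsWithin ρ (Iic ρ), -ρ < x := by
          apply eventually_nhdsWithin_of_eventually_nhds
          exact isOpen_Ioi.eventually_mem (Set.mem_Ioi.mpr (by linarith))
        filter_upwards [hev, eventually_mem_nhdsWithin] with x hx1 (hx2 : x ≤ ρ)
        rcases lt_or_eq_of_le hx2 with h | h
        · exact sa1_inner_eq (abs_lt.mpr ⟨hx1, h⟩)
        · subst h
          rw [sa1, if_pos habsρ.ge, habsρ]
          field_simp
          try ring
      · filter_upwards [eventually_mem_nhdsWithin] with x (hx : ρ ≤ x)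
        have hxpos : 0 < x := lt_of_lt_of_le hρ hx
        rw [sa1, if_pos (by rw [abs_of_pos hxpos]; exact hx), abs_of_pos hxpos,
          div_self (ne_of_gt hxpos)]
      · rw [sa1, if_pos habsρ.ge, habsρ]
        field_simp
        try ring
      · rw [sa1, if_pos habsρ.ge, habsρ, div_self hρ']
    · have hval : sa2 ρ (-ρ) = 0 := by rw [sa2, if_pos habsρ'.ge]
      rw [hval]
      apply glue (F := fun _ : ℝ => (-1:ℝ))
        (G := fun x : ℝ => 2 * x / ρ - x * |x| / ρ ^ 2)
      · exact hasDerivAt_const (-ρ) (-1)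
      · have h := hasDerivAt_inner1 (ρ := ρ) (-ρ)
        convert h using 1
        rw [habsρ']
        field_simp
        try ring
      · filter_upwards [eventually_mem_nhdsWithin] with x (hx : x ≤ -ρ)
        have hxneg : x < 0 := by linarith
        have hρx : ρ ≤ |x| := by rw [abs_of_neg hxneg]; linarith
        rw [sa1, if_pos hρx, abs_of_neg hxneg, div_neg, div_self (ne_of_lt hxneg)]
      · have hev : ∀ᶠ x in nhdsWithin (-ρ) (Ici (-ρ)), x < ρ := by
          apply eventually_nhdsWithin_of_eventually_nhds
          exact isOpen_Iio.eventually_mem (Set.mem_Iio.mpr (by linarith))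
        filter_upwards [hev, eventually_mem_nhdsWithin] with x hx1 (hx2 : -ρ ≤ x)
        rcases lt_or_eq_of_le hx2 with h | h
        · exact sa1_inner_eq (abs_lt.mpr ⟨h, hx1⟩)
        · rw [← h, sa1, if_pos habsρ'.ge, habsρ']
          field_simp
          try ring
      · rw [sa1, if_pos habsρ'.ge, habsρ', neg_div, div_self hρ']
      · rw [sa1, if_pos habsρ'.ge, habsρ']
        field_simp
        try ring
  · have hvne : v ≠ 0 := by
      intro h; rw [h, abs_zero] at hv; linarith
    rcases lt_trichotomy v 0 with hvs | hvs | hvs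
    · have h' : HasDerivAt (sa1 ρ) 0 v := by
        apply (hasDerivAt_const v (-1:ℝ)).congr_of_eventuallyEq
        have hopen : IsOpen {x : ℝ | ρ < |x| ∧ x < 0} :=
          (isOpen_lt continuous_const continuous_abs).inter isOpen_Iio
        filter_upwards [hopen.eventually_mem ⟨hv, hvs⟩] with x ⟨hx1, hx2⟩
        rw [sa1, if_pos hx1.le, abs_of_neg hx2, div_neg, div_self (ne_of_lt hx2)]
      have hval : sa2 ρ v = 0 := by rw [sa2, if_pos hv.le]
      rwa [hval]
    · exact absurd hvs hvne
    · have h' : HasDerivAt (sa1 ρ) 0 v := by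
        apply (hasDerivAt_const v (1:ℝ)).congr_of_eventuallyEq
        have hopen : IsOpen {x : ℝ | ρ < |x| ∧ 0 < x} :=
          (isOpen_lt continuous_const continuous_abs).inter isOpen_Ioi
        filter_upwards [hopen.eventually_mem ⟨hv, hvs⟩] with x ⟨hx1, hx2⟩
        rw [sa1, if_pos hx1.le, abs_of_pos hx2, div_self (ne_of_gt hx2)]
      have hval : sa2 ρ v = 0 := by rw [sa2, if_pos hv.le]
      rwa [hval]

theorem smoothAbs_second_deriv_bounds (ρ : ℝ) (hρ : 0 < ρ) (v : ℝ) :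
    0 ≤ deriv (deriv (smoothAbs ρ)) v ∧ deriv (deriv (smoothAbs ρ)) v ≤ 2 / ρ := by
  have hd1 : deriv (smoothAbs ρ) = sa1 ρ := funext fun x => (hasDerivAt_smoothAbs hρ x).deriv
  rw [hd1, (hasDerivAt_sa1 hρ v).deriv]
  rw [sa2]
  split_ifs with h
  · exact ⟨le_refl 0, by positivity⟩
  · push_neg at h
    constructor
    · have h1 : 2 * |v| / ρ ^ 2 ≤ 2 / ρ := by
        rw [div_le_div_iff₀ (by positivity) hρ]
        nlinarith [abs_nonneg v]
      linarith
    · have h2 : 0 ≤ 2 * |v| / ρ ^ 2 := by positivity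
      linarith
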